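/- arXiv:2002.12584 — 6 statements merged into one kernel-verified Lean document; each statement's English description precedes it below -/
import Mathlib

section
/- Let f_i, g_i : ℝⁿ → ℝ be convex and differentiable, h_i : ℝⁿ → ℝ affine, a_{ij} = a_{ji} ≥ 0 with a_{ii} = 0, L = diag(A·1_N) − A, 𝐋 = L ⊗ I_n, and define the Lagrangian L_g(x, λ, μ) := Σ_i [ f_i(x_i) + λ_i² g_i(x_i) + μ_i h_i(x_i) ] + xᵀ𝐋x. Suppose (x*, ξ*, λ*, μ*) satisfies the KKT condition (★): 𝐋x* = 0 (so x*_i = z* for all i); h_i(z*) = 0, g_i(z*) ≤ 0, (λ*_i)² g_i(z*) = 0 for all i; and ∇f_i(z*) + (λ*_i)² ∇g_i(z*) + μ*_i ∇h_i(z*) + Σ_j a_{ij}(ξ*_j − ξ*_i) = 0 for all i. Then for every λ, μ ∈ ℝ^N and every x ∈ ℝ^{Nn} with 𝐋x = 0, one has L_g(x*, λ, μ) ≤ L_g(x*, λ*, μ*) ≤ L_g(x, λ*, μ*). -/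
open RealInnerProductSpace

lemma conv_grad_ineq {n : ℕ} (φ : EuclideanSpace ℝ (Fin n) → ℝ)
    (hc : ConvexOn ℝ Set.univ φ) (hd : Differentiable ℝ φ)
    (z y : EuclideanSpace ℝ (Fin n)) :
    φ z + ⟪gradient φ z, y - z⟫ ≤ φ y := by
  set ψ : ℝ → ℝ := fun t => φ (z + t • (y - z)) with hψ
  have hline : ∀ t : ℝ, (AffineMap.lineMap z y : ℝ →ᵃ[ℝ] _) t = z + t • (y - z) := by
    intro t; simp [AffineMap.lineMap_apply]; abel
  have hψconv : ConvexOn ℝ Set.univ ψ := by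
    have hcomp := hc.comp_affineMap (AffineMap.lineMap z y : ℝ →ᵃ[ℝ] _)
    have heq : ψ = φ ∘ (AffineMap.lineMap z y : ℝ →ᵃ[ℝ] _) := by
      funext t; simp [Function.comp, hline t, hψ]
    rw [heq]
    simpa using hcomp
  have hderiv : HasDerivAt ψ ⟪gradient φ z, y - z⟫ 0 := by
    have h1 : HasDerivAt (fun t : ℝ => z + t • (y - z)) (y - z) 0 := by
      simpa using ((hasDerivAt_id (0:ℝ)).smul_const (y - z)).const_add z
    have h2 : HasFDerivAt φ (InnerProductSpace.toDual ℝ _ (gradient φ z)) z :=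
      (hasGradientAt_iff_hasFDerivAt.mp (hd z).hasGradientAt)
    have h3 : HasFDerivAt φ (InnerProductSpace.toDual ℝ _ (gradient φ z))
        (z + (0:ℝ) • (y - z)) := by simpa using h2
    simpa [hψ, Function.comp_def] using h3.comp_hasDerivAt 0 h1
  have := hψconv.le_slope_of_hasDerivAt (Set.mem_univ (0:ℝ)) (Set.mem_univ (1:ℝ))
    one_pos hderiv
  have hψ1 : ψ 1 = φ y := by simp [hψ]
  have hψ0 : ψ 0 = φ z := by simp [hψ]
  rw [slope_def_field, hψ1, hψ0] at this
  simp only [sub_zero, div_one] at this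
  linarith

lemma swap_sum_zero {N n : ℕ} (a : Fin N → Fin N → ℝ) (hsymm : ∀ i j, a i j = a j i)
    (ξ x : Fin N → EuclideanSpace ℝ (Fin n)) (z : EuclideanSpace ℝ (Fin n))
    (hx : ∀ i, ∑ j, a i j • (x i - x j) = (0 : EuclideanSpace ℝ (Fin n))) :
    ∑ i, ⟪(∑ j, a i j • (ξ j - ξ i)), x i - z⟫ = 0 := by
  have hx' : ∀ i, ∑ j, a i j • (x j - x i) = (0 : EuclideanSpace ℝ (Fin n)) := by
    intro i
    have e : ∑ j, a i j • (x j - x i) = -∑ j, a i j • (x i - x j) := by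
      rw [← Finset.sum_neg_distrib]
      exact Finset.sum_congr rfl fun j _ => by rw [← smul_neg, neg_sub]
    rw [e, hx i, neg_zero]
  have swapA : ∑ i, ∑ j, a i j * ⟪ξ j, x i⟫ = ∑ i, ∑ j, a i j * ⟪ξ i, x j⟫ := by
    rw [Finset.sum_comm]
    exact Finset.sum_congr rfl fun i _ => Finset.sum_congr rfl fun j _ => by rw [hsymm]
  have swapC : ∑ i, ∑ j, a i j * ⟪ξ j, z⟫ = ∑ i, ∑ j, a i j * ⟪ξ i, z⟫ := by
    rw [Finset.sum_comm]
    exact Finset.sum_congr rfl fun i _ => Finset.sum_congr rfl fun j _ => by rw [hsymm]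
  calc ∑ i, ⟪(∑ j, a i j • (ξ j - ξ i)), x i - z⟫
      = ∑ i, ∑ j, (a i j * ⟪ξ j, x i⟫ - a i j * ⟪ξ i, x i⟫
          - a i j * ⟪ξ j, z⟫ + a i j * ⟪ξ i, z⟫) := by
        refine Finset.sum_congr rfl fun i _ => ?_
        rw [sum_inner]
        refine Finset.sum_congr rfl fun j _ => ?_
        rw [real_inner_smul_left, inner_sub_left, inner_sub_right, inner_sub_right]
        ring
    _ = (∑ i, ∑ j, a i j * ⟪ξ j, x i⟫) - (∑ i, ∑ j, a i j * ⟪ξ i, x i⟫)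
          - (∑ i, ∑ j, a i j * ⟪ξ j, z⟫) + (∑ i, ∑ j, a i j * ⟪ξ i, z⟫) := by
        simp only [Finset.sum_add_distrib, Finset.sum_sub_distrib]
    _ = (∑ i, ∑ j, a i j * ⟪ξ i, x j⟫) - (∑ i, ∑ j, a i j * ⟪ξ i, x i⟫) := by
        rw [swapA, swapC]; ring
    _ = ∑ i, ⟪ξ i, ∑ j, a i j • (x j - x i)⟫ := by
        rw [← Finset.sum_sub_distrib]
        refine Finset.sum_congr rfl fun i _ => ?_
        rw [inner_sum, ← Finset.sum_sub_distrib]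
        refine (Finset.sum_congr rfl fun j _ => ?_).symm
        rw [real_inner_smul_right, inner_sub_right]
        ring
    _ = 0 := by simp [hx']


/-- A point satisfying the generalized KKT condition (★) is a saddle point
of the generalized Lagrangian `L_g(x,λ,μ) = Σᵢ [fᵢ(xᵢ) + λᵢ² gᵢ(xᵢ) + μᵢ hᵢ(xᵢ)] + xᵀ𝐋x`
over multipliers `λ, μ` and consensus points `x` (i.e. `𝐋x = 0`). -/
theorem kkt_implies_saddle_point
    (N n : ℕ)
    (f g h : Fin N → EuclideanSpace ℝ (Fin n) → ℝ)
    (hvec : Fin N → EuclideanSpace ℝ (Fin n)) (hconst : Fin N → ℝ)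
    (h_affine : ∀ i x, h i x = ⟪hvec i, x⟫ + hconst i)
    (a : Fin N → Fin N → ℝ)
    (ha_symm : ∀ i j, a i j = a j i)
    (ha_nonneg : ∀ i j, 0 ≤ a i j)
    (ha_diag : ∀ i, a i i = 0)
    (hf_conv : ∀ i, ConvexOn ℝ Set.univ (f i))
    (hf_diff : ∀ i, Differentiable ℝ (f i))
    (hg_conv : ∀ i, ConvexOn ℝ Set.univ (g i))
    (hg_diff : ∀ i, Differentiable ℝ (g i))
    -- the block Laplacian `𝐋 = L ⊗ Iₙ` acting on stacked vectors
    (Lap : (Fin N → EuclideanSpace ℝ (Fin n)) → Fin N → EuclideanSpace ℝ (Fin n))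
    (hLap : ∀ x i, Lap x i = ∑ j, a i j • (x i - x j))
    -- the generalized Lagrangian `L_g`
    (Lg : (Fin N → EuclideanSpace ℝ (Fin n)) → (Fin N → ℝ) → (Fin N → ℝ) → ℝ)
    (hLg : ∀ x lam mu, Lg x lam mu =
        (∑ i, (f i (x i) + (lam i) ^ 2 * g i (x i) + mu i * h i (x i)))
          + ∑ i, ⟪x i, Lap x i⟫)
    -- the KKT point (★)
    (xstar ξstar : Fin N → EuclideanSpace ℝ (Fin n)) (lstar mstar : Fin N → ℝ)
    (zstar : EuclideanSpace ℝ (Fin n))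
    (hkkt_Lx : ∀ i, Lap xstar i = 0)
    (hkkt_cons : ∀ i, xstar i = zstar)
    (hkkt_h : ∀ i, h i zstar = 0)
    (hkkt_g : ∀ i, g i zstar ≤ 0)
    (hkkt_slack : ∀ i, (lstar i) ^ 2 * g i zstar = 0)
    (hkkt_grad : ∀ i, gradient (f i) zstar + (lstar i) ^ 2 • gradient (g i) zstar
        + mstar i • hvec i + ∑ j, a i j • (ξstar j - ξstar i) = 0) :
    ∀ (lam mu : Fin N → ℝ) (x : Fin N → EuclideanSpace ℝ (Fin n)),
      (∀ i, Lap x i = 0) →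
        Lg xstar lam mu ≤ Lg xstar lstar mstar ∧ Lg xstar lstar mstar ≤ Lg x lstar mstar := by
  intro lam mu x hx
  have hstar : ∀ (lam' mu' : Fin N → ℝ),
      Lg xstar lam' mu' = ∑ i, (f i zstar + lam' i ^ 2 * g i zstar) := by
    intro lam' mu'
    rw [hLg]
    simp [hkkt_cons, hkkt_Lx, hkkt_h]
  constructor
  · rw [hstar lam mu, hstar lstar mstar]
    refine Finset.sum_le_sum fun i _ => ?_
    have h1 : lam i ^ 2 * g i zstar ≤ 0 :=
      mul_nonpos_of_nonneg_of_nonpos (sq_nonneg _) (hkkt_g i)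
    have h2 := hkkt_slack i
    linarith
  · rw [hstar lstar mstar, hLg]
    have hq : ∑ i, ⟪x i, Lap x i⟫ = 0 := by simp [hx]
    rw [hq, add_zero]
    have hxeq : ∀ i, ∑ j, a i j • (x i - x j) = (0 : EuclideanSpace ℝ (Fin n)) := by
      intro i; rw [← hLap]; exact hx i
    have key : ∑ i, ⟪(∑ j, a i j • (ξstar j - ξstar i)), x i - zstar⟫ = 0 :=
      swap_sum_zero a ha_symm ξstar x zstar hxeq
    have hterm : ∀ i, f i zstar + lstar i ^ 2 * g i zstar
        - ⟪(∑ j, a i j • (ξstar j - ξstar i)), x i - zstar⟫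
        ≤ f i (x i) + lstar i ^ 2 * g i (x i) + mstar i * h i (x i) := by
      intro i
      have hf' := conv_grad_ineq (f i) (hf_conv i) (hf_diff i) zstar (x i)
      have hg' := conv_grad_ineq (g i) (hg_conv i) (hg_diff i) zstar (x i)
      have hg'' : lstar i ^ 2 * (g i zstar + ⟪gradient (g i) zstar, x i - zstar⟫)
          ≤ lstar i ^ 2 * g i (x i) := mul_le_mul_of_nonneg_left hg' (sq_nonneg _)
      have hz : ⟪hvec i, zstar⟫ = -hconst i := by
        have h0 := hkkt_h i; rw [h_affine] at h0; linarith
      have hh : mstar i * h i (x i) = mstar i * ⟪hvec i, x i - zstar⟫ := by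
        rw [h_affine, inner_sub_right, hz]; ring
      have hsum : (∑ j, a i j • (ξstar j - ξstar i))
          = -(gradient (f i) zstar + (lstar i) ^ 2 • gradient (g i) zstar
              + mstar i • hvec i) := eq_neg_of_add_eq_zero_right (hkkt_grad i)
      have hinner : ⟪(∑ j, a i j • (ξstar j - ξstar i)), x i - zstar⟫
          = -(⟪gradient (f i) zstar, x i - zstar⟫
              + lstar i ^ 2 * ⟪gradient (g i) zstar, x i - zstar⟫
              + mstar i * ⟪hvec i, x i - zstar⟫) := by
        rw [hsum, inner_neg_left, inner_add_left, inner_add_left,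
          real_inner_smul_left, real_inner_smul_left]
      rw [hinner, hh]
      nlinarith [hf', hg'']
    calc ∑ i, (f i zstar + lstar i ^ 2 * g i zstar)
        = ∑ i, (f i zstar + lstar i ^ 2 * g i zstar
            - ⟪(∑ j, a i j • (ξstar j - ξstar i)), x i - zstar⟫) := by
          rw [Finset.sum_sub_distrib, key, sub_zero]
      _ ≤ ∑ i, (f i (x i) + lstar i ^ 2 * g i (x i) + mstar i * h i (x i)) :=
          Finset.sum_le_sum fun i _ => hterm i
end

section
/- Let m ≥ 2, constants 0 = b_1 < b_2 < … < b_m and c_k > 0 for k = 1,…,m, and z* ∈ ℝⁿ. Let ν : ℝ → ℝⁿ and let ρ_k : ℝ → ℝⁿ (k = 1,…,m) be differentiable with ρ_k'(t) = −b_k ρ_k(t) + c_k ν(t) for all t, and set x(t) = Σ_{k=1}^m ρ_k(t). Then the storage function S^c(t) := ‖ρ_1(t) − z*‖²/(2c_1) + Σ_{k=2}^m ‖ρ_k(t)‖²/(2c_k) is differentiable with derivative S^c{}'(t) = ⟨x(t) − z*, ν(t)⟩ − Σ_{k=2}^m (b_k/c_k) ‖ρ_k(t)‖² for all t. -/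
open RealInnerProductSpace

/-- Dissipation identity for the phase lead compensator: with
`ρₖ' = -bₖ ρₖ + cₖ ν` (here `k` ranges over `Fin (m+2)`, so there are `m + 2 ≥ 2` modes,
`b 0 = 0 < b 1 < …`), output `x = Σₖ ρₖ`, the storage
`S^c = ‖ρ₀ - z*‖²/(2c₀) + Σ_{k≠0} ‖ρₖ‖²/(2cₖ)` satisfies
`(S^c)' = ⟨x - z*, ν⟩ - Σ_{k≠0} (bₖ/cₖ)‖ρₖ‖²`. -/
theorem compensator_dissipation_identity
    (n m : ℕ)
    (b c : Fin (m + 2) → ℝ)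
    (hb0 : b 0 = 0) (hbmono : StrictMono b) (hc : ∀ k, 0 < c k)
    (zstar : EuclideanSpace ℝ (Fin n))
    (ν : ℝ → EuclideanSpace ℝ (Fin n))
    (ρ : Fin (m + 2) → ℝ → EuclideanSpace ℝ (Fin n))
    (hρ : ∀ k t, HasDerivAt (ρ k) (-(b k) • ρ k t + c k • ν t) t)
    (x : ℝ → EuclideanSpace ℝ (Fin n))
    (hx : ∀ t, x t = ∑ k, ρ k t)
    (Sc : ℝ → ℝ)
    (hSc : ∀ t, Sc t = ‖ρ 0 t - zstar‖ ^ 2 / (2 * c 0)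
        + ∑ k ∈ Finset.univ.erase (0 : Fin (m + 2)), ‖ρ k t‖ ^ 2 / (2 * c k)) :
    ∀ t, HasDerivAt Sc
      (⟪x t - zstar, ν t⟫
        - ∑ k ∈ Finset.univ.erase (0 : Fin (m + 2)), (b k / c k) * ‖ρ k t‖ ^ 2) t := by
  intro t
  have key : ∀ (k : Fin (m + 2)) (w : EuclideanSpace ℝ (Fin n)),
      HasDerivAt (fun s => ‖ρ k s - w‖ ^ 2 / (2 * c k))
        (⟪ρ k t - w, -(b k) • ρ k t + c k • ν t⟫ / c k) t := by
    intro k w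
    have h1 : HasDerivAt (fun s => ρ k s - w) (-(b k) • ρ k t + c k • ν t) t :=
      (hρ k t).sub_const w
    have h2 := (h1.inner ℝ h1).div_const (2 * c k)
    have heq : (⟪ρ k t - w, -(b k) • ρ k t + c k • ν t⟫
        + ⟪-(b k) • ρ k t + c k • ν t, ρ k t - w⟫) / (2 * c k)
        = ⟪ρ k t - w, -(b k) • ρ k t + c k • ν t⟫ / c k := by
      rw [real_inner_comm]
      have := (hc k).ne'
      field_simp
      ring
    rw [← heq]
    convert h2 using 2 with s
    · rfl
    · rfl
    rw [real_inner_self_eq_norm_sq]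
  rw [show Sc = _ from funext hSc]
  have hsum : HasDerivAt (fun s => ∑ k ∈ Finset.univ.erase (0 : Fin (m + 2)),
      ‖ρ k s‖ ^ 2 / (2 * c k))
      (∑ k ∈ Finset.univ.erase (0 : Fin (m + 2)),
        ⟪ρ k t - 0, -(b k) • ρ k t + c k • ν t⟫ / c k) t := by
    refine HasDerivAt.fun_sum fun k _ => ?_
    simpa using key k 0
  have htot := (key 0 zstar).add hsum
  convert htot using 1
  · rfl
  · rfl
  · rfl
  have hformula : ∀ k : Fin (m + 2),
      ⟪ρ k t - 0, -(b k) • ρ k t + c k • ν t⟫ / c k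
        = ⟪ρ k t, ν t⟫ - (b k / c k) * ‖ρ k t‖ ^ 2 := by
    intro k
    have hck := (hc k).ne'
    rw [sub_zero, inner_add_right, inner_smul_right, inner_smul_right,
      real_inner_self_eq_norm_sq]
    field_simp
    ring
  rw [Finset.sum_congr rfl fun k _ => hformula k]
  have h0 : ⟪ρ 0 t - zstar, -(b 0) • ρ 0 t + c 0 • ν t⟫ / c 0
      = ⟪ρ 0 t - zstar, ν t⟫ := by
    rw [hb0, neg_zero, zero_smul, zero_add, inner_smul_right,
      mul_div_cancel_left₀ _ (hc 0).ne']
  rw [h0, hx]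
  have hx' : ⟪(∑ k, ρ k t) - zstar, ν t⟫
      = ⟪ρ 0 t - zstar, ν t⟫ + ∑ k ∈ Finset.univ.erase (0 : Fin (m + 2)), ⟪ρ k t, ν t⟫ := by
    rw [← Finset.add_sum_erase _ _ (Finset.mem_univ (0 : Fin (m + 2)))]
    rw [add_sub_right_comm, inner_add_left, sum_inner]
  rw [hx', Finset.sum_sub_distrib]
  ring
end

section
/- Let m ≥ 2, constants 0 = b_1 < b_2 < … < b_m and c_k > 0 for k = 1,…,m, let f : ℝⁿ → ℝ be convex and differentiable, and fix z* ∈ ℝⁿ. Let ν : ℝ → ℝⁿ and differentiable ρ_k : ℝ → ℝⁿ satisfy ρ_k'(t) = −b_k ρ_k(t) + c_k ν(t), set x(t) = Σ_{k=1}^m ρ_k(t), and define φ(t) := ν(t) + ∇f(x(t)) and φ* := ∇f(z*). Then the storage function S^c(t) := ‖ρ_1(t) − z*‖²/(2c_1) + Σ_{k=2}^m ‖ρ_k(t)‖²/(2c_k) is nonnegative and satisfies S^c{}'(t) ≤ ⟨x(t) − z*, φ(t) − φ*⟩ for all t; i.e., the compensated primal dynamics is passive from φ − φ* to x − z*. 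-/
open RealInnerProductSpace

/-- Monotonicity of the gradient of a convex differentiable function. -/
lemma gradient_monotone_of_convex {n : ℕ}
    {f : EuclideanSpace ℝ (Fin n) → ℝ}
    (hf_conv : ConvexOn ℝ Set.univ f) (hf_diff : Differentiable ℝ f)
    (u v : EuclideanSpace ℝ (Fin n)) :
    ⟪gradient f u, v - u⟫ ≤ ⟪gradient f v, v - u⟫ := by
  set L : ℝ →ᵃ[ℝ] EuclideanSpace ℝ (Fin n) := AffineMap.lineMap u v with hL
  have hconv : ConvexOn ℝ Set.univ (f ∘ L) := by
    have := hf_conv.comp_affineMap L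
    simpa using this
  have hderiv : ∀ s : ℝ, HasDerivAt (f ∘ L) ⟪gradient f (L s), v - u⟫ s := by
    intro s
    have hLd : HasDerivAt L (v - u) s := by
      have heq : (L : ℝ → EuclideanSpace ℝ (Fin n)) = fun r : ℝ => r • (v - u) + u := by
        funext r
        simp [hL, AffineMap.lineMap_apply, vsub_eq_sub, vadd_eq_add]
      show HasDerivAt (L : ℝ → EuclideanSpace ℝ (Fin n)) (v - u) s
      rw [heq]
      simpa using ((hasDerivAt_id s).smul_const (v - u)).add_const u
    have hgrad : HasGradientAt f (gradient f (L s)) (L s) :=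
      (hf_diff (L s)).hasGradientAt
    have hfd : HasFDerivAt f ((InnerProductSpace.toDual ℝ _) (gradient f (L s))) (L s) :=
      hasGradientAt_iff_hasFDerivAt.mp hgrad
    have := hfd.comp_hasDerivAt s hLd
    simpa [InnerProductSpace.toDual_apply_apply] using this
  have hdiff : ∀ s ∈ Set.univ, DifferentiableAt ℝ (f ∘ L) s :=
    fun s _ => (hderiv s).differentiableAt
  have hmono := hconv.monotoneOn_deriv hdiff
  have h01 := hmono (Set.mem_univ (0 : ℝ)) (Set.mem_univ (1 : ℝ)) zero_le_one
  rw [(hderiv 0).deriv, (hderiv 1).deriv] at h01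
  simpa [hL, AffineMap.lineMap_apply] using h01

/-- Derivative of `t ↦ ‖u t - w‖ ^ 2 / (2 * c)`. -/
lemma hasDerivAt_norm_sq_div {n : ℕ} {u : ℝ → EuclideanSpace ℝ (Fin n)}
    {u' : EuclideanSpace ℝ (Fin n)} {t : ℝ} (w : EuclideanSpace ℝ (Fin n)) {c : ℝ}
    (hc : c ≠ 0) (h : HasDerivAt u u' t) :
    HasDerivAt (fun t => ‖u t - w‖ ^ 2 / (2 * c)) (⟪u t - w, u'⟫ / c) t := by
  have hd : HasDerivAt (fun t => u t - w) u' t := h.sub_const w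
  have hi := (hd.inner ℝ hd).div_const (2 * c)
  have heq : (fun t => ‖u t - w‖ ^ 2 / (2 * c))
      = fun t => ⟪u t - w, u t - w⟫ / (2 * c) := by
    funext s
    rw [real_inner_self_eq_norm_sq]
  rw [heq]
  refine hi.congr_deriv ?_
  rw [real_inner_comm (u t - w) u']
  field_simp
  ring

/-- Passivity of the compensated primal dynamics: with
`ρₖ' = -bₖ ρₖ + cₖ ν` (indices in `Fin (m+2)`, so `m + 2 ≥ 2` modes, `b 0 = 0 < b 1 < …`),
`x = Σₖ ρₖ`, `φ = ν + ∇f(x)`, `φ* = ∇f(z*)`, the storage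
`S^c = ‖ρ₀ - z*‖²/(2c₀) + Σ_{k≠0} ‖ρₖ‖²/(2cₖ)` is nonnegative and satisfies
`(S^c)'(t) ≤ ⟨x(t) - z*, φ(t) - φ*⟩`. -/
theorem compensated_primal_dynamics_passive
    (n m : ℕ)
    (b c : Fin (m + 2) → ℝ)
    (hb0 : b 0 = 0) (hbmono : StrictMono b) (hc : ∀ k, 0 < c k)
    (f : EuclideanSpace ℝ (Fin n) → ℝ)
    (hf_conv : ConvexOn ℝ Set.univ f)
    (hf_diff : Differentiable ℝ f)
    (zstar : EuclideanSpace ℝ (Fin n))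
    (ν : ℝ → EuclideanSpace ℝ (Fin n))
    (ρ : Fin (m + 2) → ℝ → EuclideanSpace ℝ (Fin n))
    (hρ : ∀ k t, HasDerivAt (ρ k) (-(b k) • ρ k t + c k • ν t) t)
    (x : ℝ → EuclideanSpace ℝ (Fin n))
    (hx : ∀ t, x t = ∑ k, ρ k t)
    (φ : ℝ → EuclideanSpace ℝ (Fin n))
    (hφ : ∀ t, φ t = ν t + gradient f (x t))
    (φstar : EuclideanSpace ℝ (Fin n))
    (hφstar : φstar = gradient f zstar)
    (Sc : ℝ → ℝ)
    (hSc : ∀ t, Sc t = ‖ρ 0 t - zstar‖ ^ 2 / (2 * c 0)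
        + ∑ k ∈ Finset.univ.erase (0 : Fin (m + 2)), ‖ρ k t‖ ^ 2 / (2 * c k)) :
    (∀ t, 0 ≤ Sc t) ∧
      ∀ t, ∃ d : ℝ, HasDerivAt Sc d t ∧ d ≤ ⟪x t - zstar, φ t - φstar⟫ := by
  constructor
  · intro t
    rw [hSc t]
    have hc0 := hc 0
    have h1 : 0 ≤ ‖ρ 0 t - zstar‖ ^ 2 / (2 * c 0) := by positivity
    have h2 : 0 ≤ ∑ k ∈ Finset.univ.erase (0 : Fin (m + 2)), ‖ρ k t‖ ^ 2 / (2 * c k) := by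
      apply Finset.sum_nonneg
      intro k _
      have := hc k
      positivity
  
    linarith
  · intro t
    refine ⟨⟪ρ 0 t - zstar, -(b 0) • ρ 0 t + c 0 • ν t⟫ / c 0
        + ∑ k ∈ Finset.univ.erase (0 : Fin (m + 2)),
            ⟪ρ k t - 0, -(b k) • ρ k t + c k • ν t⟫ / c k, ?_, ?_⟩
    · have hScEq : Sc = fun t => ‖ρ 0 t - zstar‖ ^ 2 / (2 * c 0)
          + ∑ k ∈ Finset.univ.erase (0 : Fin (m + 2)), ‖ρ k t - 0‖ ^ 2 / (2 * c k) := by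
        funext s
        rw [hSc s]
        simp
      rw [hScEq]
      exact (hasDerivAt_norm_sq_div zstar (hc 0).ne' (hρ 0 t)).add
        (HasDerivAt.fun_sum fun k _ => hasDerivAt_norm_sq_div 0 (hc k).ne' (hρ k t))
    · -- bound the derivative
      have hterm0 : ⟪ρ 0 t - zstar, -(b 0) • ρ 0 t + c 0 • ν t⟫ / c 0
          = ⟪ρ 0 t - zstar, ν t⟫ := by
        rw [hb0, neg_zero, zero_smul, zero_add, real_inner_smul_right]
        exact mul_div_cancel_left₀ _ (hc 0).ne'
      have htermk : ∀ k ∈ Finset.univ.erase (0 : Fin (m + 2)),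
          ⟪ρ k t - 0, -(b k) • ρ k t + c k • ν t⟫ / c k ≤ ⟪ρ k t, ν t⟫ := by
        intro k hk
        have hk0 : (0 : Fin (m + 2)) < k := by
          have := Finset.ne_of_mem_erase hk
          exact Fin.pos_iff_ne_zero.mpr this
        have hbk : 0 < b k := hb0 ▸ hbmono hk0
        rw [sub_zero, inner_add_right, real_inner_smul_right, real_inner_smul_right,
          real_inner_self_eq_norm_sq]
        have hnn : -(b k) * ‖ρ k t‖ ^ 2 ≤ 0 := by
          have : 0 ≤ ‖ρ k t‖ ^ 2 := by positivity
          nlinarith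
        have hck := hc k
        rw [div_le_iff₀ hck]
        nlinarith
      have hsum : ∑ k ∈ Finset.univ.erase (0 : Fin (m + 2)),
          ⟪ρ k t - 0, -(b k) • ρ k t + c k • ν t⟫ / c k
          ≤ ∑ k ∈ Finset.univ.erase (0 : Fin (m + 2)), ⟪ρ k t, ν t⟫ :=
        Finset.sum_le_sum htermk
      have hxν : ⟪ρ 0 t - zstar, ν t⟫
          + ∑ k ∈ Finset.univ.erase (0 : Fin (m + 2)), ⟪ρ k t, ν t⟫
          = ⟪x t - zstar, ν t⟫ := by
        rw [hx t, inner_sub_left, inner_sub_left, sum_inner,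
          ← Finset.add_sum_erase _ (fun k => ⟪ρ k t, ν t⟫) (Finset.mem_univ (0 : Fin (m + 2)))]
        ring
      have hgr := gradient_monotone_of_convex hf_conv hf_diff zstar (x t)
      have hrhs : ⟪x t - zstar, φ t - φstar⟫
          = ⟪x t - zstar, ν t⟫
            + (⟪gradient f (x t), x t - zstar⟫ - ⟪gradient f zstar, x t - zstar⟫) := by
        rw [hφ t, hφstar, inner_sub_right, inner_add_right,
          real_inner_comm (gradient f (x t)) (x t - zstar),
          real_inner_comm (gradient f zstar) (x t - zstar)]
        ring
      rw [hterm0]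
      linarith
end

section
/- Let g : ℝⁿ → ℝ be convex and differentiable, h : ℝⁿ → ℝ affine, and let z* ∈ ℝⁿ and λ* ∈ ℝ satisfy g(z*) ≤ 0, (λ*)² g(z*) = 0, and h(z*) = 0. Then for every x ∈ ℝⁿ and every λ, μ, μ* ∈ ℝ: (λ² − (λ*)²) g(x) + (μ − μ*) h(x) ≤ ⟨ λ² ∇g(x) + μ ∇h(x) − (λ*)² ∇g(z*) − μ* ∇h(z*), x − z* ⟩. -/
open RealInnerProductSpace

lemma grad_first_order {n : ℕ} (g : EuclideanSpace ℝ (Fin n) → ℝ)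
    (hc : ConvexOn ℝ Set.univ g) (hd : Differentiable ℝ g)
    (x y : EuclideanSpace ℝ (Fin n)) :
    ⟪gradient g x, y - x⟫ ≤ g y - g x := by
  set L : ℝ → EuclideanSpace ℝ (Fin n) := fun t => x + t • (y - x) with hL
  set φ : ℝ → ℝ := fun t => g (L t) with hφ
  have hLaff : ∀ t, L t = AffineMap.lineMap x y t := by
    intro t; simp [hL, AffineMap.lineMap_apply_module']; abel
  have hφc : ConvexOn ℝ Set.univ φ := by
    have := hc.comp_affineMap (AffineMap.lineMap (k := ℝ) x y)
    have h2 : φ = g ∘ (AffineMap.lineMap (k := ℝ) x y) := by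
      funext t; simp [hφ, hLaff t]
    rw [h2]
    simpa using this
  have hline : HasDerivAt L (y - x) 0 := by
    have : HasDerivAt (fun t : ℝ => x + t • (y - x)) ((1 : ℝ) • (y - x)) 0 :=
      (((hasDerivAt_id (0:ℝ)).smul_const (y - x)).const_add x)
    simpa [hL] using this
  have hgrad := (hd (L 0)).hasGradientAt
  rw [hasGradientAt_iff_hasFDerivAt] at hgrad
  have hder : HasDerivAt φ ⟪gradient g x, y - x⟫ 0 := by
    have := hgrad.comp_hasDerivAt 0 hline
    have hL0 : L 0 = x := by simp [hL]
    simp [hφ, hL0, InnerProductSpace.toDual_apply_apply] at this ⊢; exact this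
  have := hφc.le_slope_of_hasDerivAt (Set.mem_univ (0:ℝ)) (Set.mem_univ (1:ℝ)) one_pos hder
  have hs : slope φ 0 1 = g y - g x := by
    have hL1 : L 1 = y := by simp [hL]
    have hL0 : L 0 = x := by simp [hL]
    simp [slope, hφ, hL1, hL0]
  linarith [this.trans_eq hs]

/-- Core inequality behind the passivity of the dual dynamics: for `g`
convex differentiable, `h` affine (with constant gradient `hvec`), and `(z*, λ*)` satisfying
`g(z*) ≤ 0`, `(λ*)² g(z*) = 0`, `h(z*) = 0`, one has for all `x, λ, μ, μ*`:
`(λ² - (λ*)²) g(x) + (μ - μ*) h(x) ≤ ⟨λ²∇g(x) + μ∇h(x) - (λ*)²∇g(z*) - μ*∇h(z*), x - z*⟩`. -/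
theorem dual_dynamics_core_inequality
    (n : ℕ)
    (g h : EuclideanSpace ℝ (Fin n) → ℝ)
    (hvec : EuclideanSpace ℝ (Fin n)) (hconst : ℝ)
    (h_affine : ∀ x, h x = ⟪hvec, x⟫ + hconst)
    (hg_conv : ConvexOn ℝ Set.univ g)
    (hg_diff : Differentiable ℝ g)
    (zstar : EuclideanSpace ℝ (Fin n)) (lstar : ℝ)
    (hgz : g zstar ≤ 0)
    (hslack : lstar ^ 2 * g zstar = 0)
    (hhz : h zstar = 0) :
    ∀ (x : EuclideanSpace ℝ (Fin n)) (lam mu mustar : ℝ),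
      (lam ^ 2 - lstar ^ 2) * g x + (mu - mustar) * h x
        ≤ ⟪lam ^ 2 • gradient g x + mu • hvec
            - lstar ^ 2 • gradient g zstar - mustar • hvec, x - zstar⟫ := by
  intro x lam mu mustar
  set A := ⟪gradient g x, x - zstar⟫ with hA
  set B := ⟪gradient g zstar, x - zstar⟫ with hB
  set C := ⟪hvec, x - zstar⟫ with hC
  have hC' : C = h x := by
    rw [hC, inner_sub_right, h_affine x]
    have := h_affine zstar
    rw [hhz] at this
    linarith
  have h1 : g x - g zstar ≤ A := by
    have := grad_first_order g hg_conv hg_diff x zstar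
    have hneg : zstar - x = -(x - zstar) := by abel
    rw [hneg, inner_neg_right] at this
    linarith [hA ▸ this]
  have h2 : B ≤ g x - g zstar := by
    have := grad_first_order g hg_conv hg_diff zstar x
    linarith [hB ▸ this]
  have hRHS : ⟪lam ^ 2 • gradient g x + mu • hvec
      - lstar ^ 2 • gradient g zstar - mustar • hvec, x - zstar⟫
      = lam ^ 2 * A + mu * C - lstar ^ 2 * B - mustar * C := by
    simp only [inner_sub_left, inner_add_left, real_inner_smul_left, hA, hB, hC]
  rw [hRHS, hC']
  nlinarith [mul_nonneg (sq_nonneg lam) (by linarith : (0:ℝ) ≤ A - (g x - g zstar)),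
    mul_nonneg (sq_nonneg lstar) (by linarith : (0:ℝ) ≤ g x - g zstar - B),
    mul_nonneg (sq_nonneg lam) (by linarith : (0:ℝ) ≤ -g zstar), hslack]
end

section
/- Let g : ℝⁿ → ℝ be convex and differentiable, h : ℝⁿ → ℝ affine, and let z* ∈ ℝⁿ, λ* ≥ 0, μ* ∈ ℝ satisfy g(z*) ≤ 0, (λ*)² g(z*) = 0, h(z*) = 0. Let x : ℝ → ℝⁿ be continuous and let λ, μ : ℝ → ℝ be differentiable with λ'(t) = 2 λ(t) g(x(t)), μ'(t) = h(x(t)), and λ(t) > 0 for all t. Define the storage function S^g(t) := (λ(t)² − (λ*)²)/4 − ((λ*)²/2)(ln λ(t) − ln λ*) + (μ(t) − μ*)²/2 (the logarithmic term being 0 when λ* = 0). Then S^g(t) ≥ 0, S^g(t) = 0 exactly when (λ(t), μ(t)) = (λ*, μ*), and S^g is differentiable with S^g{}'(t) ≤ ⟨ ζ(t) − ζ*, x(t) − z* ⟩ for all t, where ζ(t) := λ(t)² ∇g(x(t)) + μ(t) ∇h(x(t)) and ζ* := (λ*)² ∇g(z*) + μ* ∇h(z*); i.e., the dual gradient dynamics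 is passive from x − z* to ζ − ζ*. -/
open RealInnerProductSpace

lemma inner_gradient_eq {n : ℕ} (f : EuclideanSpace ℝ (Fin n) → ℝ)
    (p v : EuclideanSpace ℝ (Fin n)) :
    ⟪gradient f p, v⟫ = fderiv ℝ f p v := by
  rw [gradient, InnerProductSpace.toDual_symm_apply]

lemma grad_ineq {n : ℕ} {g : EuclideanSpace ℝ (Fin n) → ℝ}
    (hg_conv : ConvexOn ℝ Set.univ g) (hg_diff : Differentiable ℝ g)
    (p q : EuclideanSpace ℝ (Fin n)) :
    g p + ⟪gradient g p, q - p⟫ ≤ g q := by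
  set c : ℝ → EuclideanSpace ℝ (Fin n) := fun s => s • (q - p) + p with hc_def
  have hc : ∀ s, HasDerivAt c (q - p) s := by
    intro s
    simpa [hc_def] using ((hasDerivAt_id s).smul_const (q - p)).add_const p
  have hceq : c = fun s : ℝ => AffineMap.lineMap p q s := by
    funext s; simp [hc_def, AffineMap.lineMap_apply_module]; module
  have hφconv : ConvexOn ℝ Set.univ (g ∘ c) := by
    rw [hceq]
    have := hg_conv.comp_affineMap (AffineMap.lineMap p q : ℝ →ᵃ[ℝ] EuclideanSpace ℝ (Fin n))
    simpa using this
  have hφd : HasDerivAt (g ∘ c) (fderiv ℝ g p (q - p)) 0 := by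
    have h0 : c 0 = p := by simp [hc_def]
    have := ((hg_diff (c 0)).hasFDerivAt.comp_hasDerivAt 0 (hc 0))
    rwa [h0] at this
  have := hφconv.le_slope_of_hasDerivAt (Set.mem_univ (0:ℝ)) (Set.mem_univ (1:ℝ))
    one_pos hφd
  rw [slope_def_field] at this
  have h0 : c 0 = p := by simp [hc_def]
  have h1 : c 1 = q := by simp [hc_def]
  simp only [Function.comp_apply, h0, h1] at this
  have : fderiv ℝ g p (q - p) ≤ g q - g p := by
    simpa using this
  rw [inner_gradient_eq]
  linarith

lemma phi_ge {a l : ℝ} (ha : 0 < a) (hl : 0 < l) :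
    (l - a) ^ 2 / 4 ≤ (l ^ 2 - a ^ 2) / 4 - a ^ 2 / 2 * (Real.log l - Real.log a) := by
  have hlog : Real.log l - Real.log a ≤ l / a - 1 := by
    rw [← Real.log_div hl.ne' ha.ne']
    exact Real.log_le_sub_one_of_pos (div_pos hl ha)
  have key : a ^ 2 / 2 * (l / a - 1) = a * l / 2 - a ^ 2 / 2 := by
    field_simp
  nlinarith [mul_le_mul_of_nonneg_left hlog (by positivity : (0:ℝ) ≤ a ^ 2 / 2)]

lemma phi_gt {a l : ℝ} (ha : 0 < a) (hl : 0 < l) (hne : l ≠ a) :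
    (l - a) ^ 2 / 4 < (l ^ 2 - a ^ 2) / 4 - a ^ 2 / 2 * (Real.log l - Real.log a) := by
  have hlog : Real.log l - Real.log a < l / a - 1 := by
    rw [← Real.log_div hl.ne' ha.ne']
    exact Real.log_lt_sub_one_of_pos (div_pos hl ha)
      (by rw [Ne, div_eq_one_iff_eq ha.ne']; exact hne)
  have key : a ^ 2 / 2 * (l / a - 1) = a * l / 2 - a ^ 2 / 2 := by
    field_simp
  nlinarith [mul_lt_mul_of_pos_left hlog (by positivity : (0:ℝ) < a ^ 2 / 2)]

theorem dual_gradient_dynamics_passive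
    (n : ℕ)
    (g h : EuclideanSpace ℝ (Fin n) → ℝ)
    (hvec : EuclideanSpace ℝ (Fin n)) (hconst : ℝ)
    (h_affine : ∀ x, h x = ⟪hvec, x⟫ + hconst)
    (hg_conv : ConvexOn ℝ Set.univ g)
    (hg_diff : Differentiable ℝ g)
    (zstar : EuclideanSpace ℝ (Fin n)) (lstar mustar : ℝ)
    (hlstar : 0 ≤ lstar)
    (hgz : g zstar ≤ 0)
    (hslack : lstar ^ 2 * g zstar = 0)
    (hhz : h zstar = 0)
    (x : ℝ → EuclideanSpace ℝ (Fin n)) (hx_cont : Continuous x)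
    (lam mu : ℝ → ℝ)
    (hlam : ∀ t, HasDerivAt lam (2 * lam t * g (x t)) t)
    (hmu : ∀ t, HasDerivAt mu (h (x t)) t)
    (hlam_pos : ∀ t, 0 < lam t)
    (Sg : ℝ → ℝ)
    (hSg : ∀ t, Sg t = ((lam t) ^ 2 - lstar ^ 2) / 4
        - (lstar ^ 2 / 2) * (Real.log (lam t) - Real.log lstar)
        + (mu t - mustar) ^ 2 / 2)
    (ζ : ℝ → EuclideanSpace ℝ (Fin n))
    (hζ : ∀ t, ζ t = (lam t) ^ 2 • gradient g (x t) + mu t • hvec)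
    (ζstar : EuclideanSpace ℝ (Fin n))
    (hζstar : ζstar = lstar ^ 2 • gradient g zstar + mustar • hvec) :
    (∀ t, 0 ≤ Sg t) ∧
      (∀ t, Sg t = 0 ↔ (lam t = lstar ∧ mu t = mustar)) ∧
      ∀ t, ∃ d : ℝ, HasDerivAt Sg d t ∧ d ≤ ⟪ζ t - ζstar, x t - zstar⟫ := by
  -- lower bound on the storage function
  have hlb : ∀ t, (lam t - lstar) ^ 2 / 4 + (mu t - mustar) ^ 2 / 2 ≤ Sg t := by
    intro t
    rcases hlstar.lt_or_eq with hpos | hzero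
    · have := phi_ge hpos (hlam_pos t)
      rw [hSg t]; linarith
    · rw [hSg t, ← hzero]; norm_num
  have hlb' : ∀ t, Sg t = 0 → lam t = lstar := by
    intro t h0
    rcases hlstar.lt_or_eq with hpos | hzero
    · by_contra hne
      have := phi_gt hpos (hlam_pos t) hne
      rw [hSg t] at h0
      nlinarith [sq_nonneg (lam t - lstar), sq_nonneg (mu t - mustar)]
    · exfalso
      rw [hSg t, ← hzero] at h0
      norm_num at h0
      nlinarith [hlam_pos t, sq_nonneg (mu t - mustar)]
  refine ⟨fun t => le_trans (by positivity) (hlb t), fun t => ?_, fun t => ?_⟩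
  · constructor
    · intro h0
      have hl : lam t = lstar := hlb' t h0
      refine ⟨hl, ?_⟩
      rw [hSg t, hl] at h0
      nlinarith [sq_nonneg (mu t - mustar)]
    · rintro ⟨h1, h2⟩
      rw [hSg t, h1, h2]; ring
  · -- passivity
    set L := lam t with hL
    set G := g (x t) with hG
    set M := mu t with hM
    refine ⟨(L ^ 2 - lstar ^ 2) * G + (M - mustar) * h (x t), ?_, ?_⟩
    · have hfun : Sg = fun s => ((lam s) ^ 2 - lstar ^ 2) / 4
          - (lstar ^ 2 / 2) * (Real.log (lam s) - Real.log lstar)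
          + (mu s - mustar) ^ 2 / 2 := funext hSg
      rw [hfun]
      have h1 := (hlam t).pow 2
      have h2 := (hlam t).log (hlam_pos t).ne'
      have h3 := ((hmu t).sub_const mustar).pow 2
      have hcomb := (((h1.sub_const (lstar ^ 2)).div_const 4).sub
        ((h2.sub_const (Real.log lstar)).const_mul (lstar ^ 2 / 2))).add (h3.div_const 2)
      refine hcomb.congr_deriv ?_
      field_simp [(hlam_pos t).ne']
      ring
    · -- the supply-rate inequality
      have hinner : ∀ p, ⟪hvec, p - zstar⟫ = h p := by
        intro p
        have h1 := h_affine p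
        have h2 := h_affine zstar
        rw [inner_sub_right]
        linarith
      have hrhs : ⟪ζ t - ζstar, x t - zstar⟫
          = L ^ 2 * ⟪gradient g (x t), x t - zstar⟫
            - lstar ^ 2 * ⟪gradient g zstar, x t - zstar⟫
            + (M - mustar) * ⟪hvec, x t - zstar⟫ := by
        rw [hζ t, hζstar]
        simp only [inner_sub_left, inner_add_left, real_inner_smul_left]
        ring
      have e1 := grad_ineq hg_conv hg_diff (x t) zstar
      have e2 := grad_ineq hg_conv hg_diff zstar (x t)
      have e1' : G - g zstar ≤ ⟪gradient g (x t), x t - zstar⟫ := by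
        rw [show zstar - x t = -(x t - zstar) by abel, inner_neg_right] at e1
        linarith
      have e2' : ⟪gradient g zstar, x t - zstar⟫ ≤ G - g zstar := by linarith
      rw [hrhs, hinner (x t)]
      have k1 : lstar ^ 2 * ⟪gradient g zstar, x t - zstar⟫ ≤ lstar ^ 2 * (G - g zstar) :=
        mul_le_mul_of_nonneg_left e2' (sq_nonneg lstar)
      have k2 : L ^ 2 * (G - g zstar) ≤ L ^ 2 * ⟪gradient g (x t), x t - zstar⟫ :=
        mul_le_mul_of_nonneg_left e1' (sq_nonneg L)
      have k3 : L ^ 2 * g zstar ≤ 0 := mul_nonpos_of_nonneg_of_nonpos (sq_nonneg L) hgz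
      linarith
end

section
/- Consider N agents with convex, twice continuously differentiable f_i, g_i : ℝⁿ → ℝ, affine h_i : ℝⁿ → ℝ, symmetric weights a_{ij} = a_{ji} ≥ 0 (a_{ii} = 0), Laplacian L = diag(A·1_N) − A, 𝐋 = L ⊗ I_n, and suppose (x*, ξ*, λ*, μ*) satisfies the KKT condition (★): 𝐋x* = 0 (so x*_i = z* for all i); h_i(z*) = 0, g_i(z*) ≤ 0, (λ*_i)² g_i(z*) = 0; and ∇f_i(z*) + (λ*_i)² ∇g_i(z*) + μ*_i ∇h_i(z*) + Σ_j a_{ij}(ξ*_j − ξ*_i) = 0 for all i. Let (ρ^i_k, ξ_i, λ_i, μ_i), i = 1,…,N, k = 1,…,m (m ≥ 2), be differentiable functions of t solving the compensated primal–dual flow: (ρ^i_k)' = −b^i_k ρ^i_k + c^i_k ν_i with 0 = b^i_1 < b^i_2 < … < b^i_m and c^i_k > 0; x_i = Σ_k ρ^i_k; ν_i = −∇f_i(x_i) − λ_i² ∇g_i(x_i) − μ_i ∇h_i(x_i) + Σ_j a_{ij}(x_j − x_i) − Σ_j a_{ij}(ξ_j − ξ_i); ξ_i' = Σ_j a_{ij}(x_j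 − x_i); λ_i' = 2λ_i g_i(x_i); μ_i' = h_i(x_i); and λ_i(t) > 0 for all t, i. Then the Lyapunov function V(t) := Σ_i [ (λ_i² − (λ*_i)²)/4 − ((λ*_i)²/2)(ln λ_i − ln λ*_i) + (μ_i − μ*_i)²/2 ] + Σ_i [ ‖ρ^i_1 − z*‖²/(2c^i_1) + Σ_{k=2}^m ‖ρ^i_k‖²/(2c^i_k) ] + ½‖ξ − ξ*‖² (log terms absent where λ*_i = 0) satisfies V'(t) ≤ −(x(t) − x*)ᵀ 𝐋 (x(t) − x*) − Σ_i Σ_{k=2}^m (b^i_k/c^i_k)‖ρ^i_k(t)‖² ≤ 0 for all t. -/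
open RealInnerProductSpace

section AuxLemmas

lemma aux_grad_ineq {E : Type*} [NormedAddCommGroup E] [InnerProductSpace ℝ E]
    [CompleteSpace E] {f : E → ℝ} (hconv : ConvexOn ℝ Set.univ f)
    (hdiff : Differentiable ℝ f) (x y : E) :
    f x + ⟪gradient f x, y - x⟫ ≤ f y := by
  have hg : HasGradientAt f (gradient f x) x := (hdiff x).hasGradientAt
  have hf' : HasFDerivAt f (InnerProductSpace.toDual ℝ E (gradient f x)) x :=
    hasGradientAt_iff_hasFDerivAt.mp hg
  set c : ℝ → E := fun s => x + s • (y - x) with hc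
  have hcd : HasDerivAt c (y - x) 0 := by
    simpa [hc] using ((hasDerivAt_id (0:ℝ)).smul_const (y - x)).const_add x
  have hc0 : c 0 = x := by simp [hc]
  have hφ : HasDerivAt (f ∘ c) ⟪gradient f x, y - x⟫ 0 := by
    have := (hc0 ▸ hf').comp_hasDerivAt 0 hcd
    simpa [InnerProductSpace.toDual_apply_apply, hc0] using this
  have hφconv : ConvexOn ℝ Set.univ (f ∘ c) := by
    have := hconv.comp_affineMap (AffineMap.lineMap x y : ℝ →ᵃ[ℝ] E)
    simp only [Set.preimage_univ] at this
    have hfun : f ∘ c = f ∘ ⇑(AffineMap.lineMap x y : ℝ →ᵃ[ℝ] E) := by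
      funext s
      simp [hc, AffineMap.lineMap_apply, add_comm]
    rw [hfun]; exact this
  have hsl := hφconv.le_slope_of_hasDerivAt (Set.mem_univ 0) (Set.mem_univ 1)
    (by norm_num) hφ
  rw [slope_def_field] at hsl
  have hc1 : c 1 = y := by simp [hc]
  simp only [Function.comp_apply, hc0, hc1] at hsl
  have : f x + ⟪gradient f x, y - x⟫ ≤ f x + (f y - f x) := by
    have h1 : ((1:ℝ) - 0) = 1 := by norm_num
    rw [h1, div_one] at hsl
    linarith
  linarith

lemma aux_grad_mono {E : Type*} [NormedAddCommGroup E] [InnerProductSpace ℝ E]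
    [CompleteSpace E] {f : E → ℝ} (hconv : ConvexOn ℝ Set.univ f)
    (hdiff : Differentiable ℝ f) (x y : E) :
    0 ≤ ⟪gradient f x - gradient f y, x - y⟫ := by
  have h1 := aux_grad_ineq hconv hdiff x y
  have h2 := aux_grad_ineq hconv hdiff y x
  have e1 : ⟪gradient f x, y - x⟫ = -⟪gradient f x, x - y⟫ := by
    rw [← inner_neg_right]; congr 1; abel
  rw [inner_sub_left]
  linarith

lemma aux_lap_sym {ι : Type*} [Fintype ι] {E : Type*} [NormedAddCommGroup E]
    [InnerProductSpace ℝ E] (a : ι → ι → ℝ) (hsymm : ∀ i j, a i j = a j i)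
    (u v : ι → E) :
    ∑ i, ⟪u i, ∑ j, a i j • (v j - v i)⟫ = ∑ i, ⟪v i, ∑ j, a i j • (u j - u i)⟫ := by
  simp only [inner_sum, real_inner_smul_right, inner_sub_right, mul_sub,
    Finset.sum_sub_distrib]
  congr 1
  · rw [Finset.sum_comm]
    refine Finset.sum_congr rfl fun i _ => Finset.sum_congr rfl fun j _ => ?_
    rw [hsymm j i, real_inner_comm]
  · refine Finset.sum_congr rfl fun i _ => ?_
    rw [← Finset.sum_mul, ← Finset.sum_mul, real_inner_comm]

lemma aux_lap_nonneg {ι : Type*} [Fintype ι] {E : Type*} [NormedAddCommGroup E]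
    [InnerProductSpace ℝ E] (a : ι → ι → ℝ) (hsymm : ∀ i j, a i j = a j i)
    (hnonneg : ∀ i j, 0 ≤ a i j) (u : ι → E) :
    0 ≤ ∑ i, ⟪u i, ∑ j, a i j • (u i - u j)⟫ := by
  have hS : ∑ i, ⟪u i, ∑ j, a i j • (u i - u j)⟫
      = ∑ i, ∑ j, a i j * ⟪u i, u i - u j⟫ := by
    simp only [inner_sum, real_inner_smul_right]
  have hswap : ∑ i, ∑ j, a i j * ⟪u i, u i - u j⟫
      = ∑ i, ∑ j, a i j * ⟪u j, u j - u i⟫ := by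
    rw [Finset.sum_comm]
    exact Finset.sum_congr rfl fun i _ => Finset.sum_congr rfl fun j _ => by
      rw [hsymm j i]
  have hdouble : (∑ i, ⟪u i, ∑ j, a i j • (u i - u j)⟫)
      + (∑ i, ⟪u i, ∑ j, a i j • (u i - u j)⟫)
      = ∑ i, ∑ j, a i j * ‖u i - u j‖ ^ 2 := by
    rw [hS]
    nth_rewrite 2 [hswap]
    rw [← Finset.sum_add_distrib]
    refine Finset.sum_congr rfl fun i _ => ?_
    rw [← Finset.sum_add_distrib]
    refine Finset.sum_congr rfl fun j _ => ?_
    rw [← mul_add]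
    congr 1
    rw [← real_inner_self_eq_norm_sq]
    simp only [inner_sub_left, inner_sub_right]
    rw [real_inner_comm (u j) (u i)]
    ring
  have hpos : 0 ≤ ∑ i, ∑ j, a i j * ‖u i - u j‖ ^ 2 :=
    Finset.sum_nonneg fun i _ => Finset.sum_nonneg fun j _ =>
      mul_nonneg (hnonneg i j) (sq_nonneg _)
  linarith

end AuxLemmas

/-- Along the compensated primal–dual flow of the generalized Lagrangian
(with phase lead compensators of order `m + 2 ≥ 2` per agent), the Lyapunov function `V`,
built from the logarithmic dual storage, the compensator storage and `½‖ξ - ξ*‖²`, satisfies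
`V'(t) ≤ -(x - x*)ᵀ𝐋(x - x*) - Σᵢ Σ_{k≠0} (bᵢₖ/cᵢₖ)‖ρᵢₖ‖² ≤ 0`. -/
theorem lyapunov_derivative_nonpositive
    (N n m : ℕ)
    (f g h : Fin N → EuclideanSpace ℝ (Fin n) → ℝ)
    (hvec : Fin N → EuclideanSpace ℝ (Fin n)) (hconst : Fin N → ℝ)
    (h_affine : ∀ i x, h i x = ⟪hvec i, x⟫ + hconst i)
    (hf_conv : ∀ i, ConvexOn ℝ Set.univ (f i))
    (hf_smooth : ∀ i, ContDiff ℝ 2 (f i))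
    (hg_conv : ∀ i, ConvexOn ℝ Set.univ (g i))
    (hg_smooth : ∀ i, ContDiff ℝ 2 (g i))
    (a : Fin N → Fin N → ℝ)
    (ha_symm : ∀ i j, a i j = a j i)
    (ha_nonneg : ∀ i j, 0 ≤ a i j)
    (ha_diag : ∀ i, a i i = 0)
    -- the KKT point (★)
    (xstar ξstar : Fin N → EuclideanSpace ℝ (Fin n)) (lstar mstar : Fin N → ℝ)
    (zstar : EuclideanSpace ℝ (Fin n))
    (hkkt_Lx : ∀ i, (∑ j, a i j • (xstar i - xstar j)) = 0)
    (hkkt_cons : ∀ i, xstar i = zstar)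
    (hkkt_h : ∀ i, h i zstar = 0)
    (hkkt_g : ∀ i, g i zstar ≤ 0)
    (hkkt_slack : ∀ i, (lstar i) ^ 2 * g i zstar = 0)
    (hkkt_grad : ∀ i, gradient (f i) zstar + (lstar i) ^ 2 • gradient (g i) zstar
        + mstar i • hvec i + ∑ j, a i j • (ξstar j - ξstar i) = 0)
    -- compensator coefficients of each agent
    (b c : Fin N → Fin (m + 2) → ℝ)
    (hb0 : ∀ i, b i 0 = 0) (hbmono : ∀ i, StrictMono (b i)) (hc : ∀ i k, 0 < c i k)
    -- trajectories of the compensated primal–dual flow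
    (ρ : Fin N → Fin (m + 2) → ℝ → EuclideanSpace ℝ (Fin n))
    (ξ : Fin N → ℝ → EuclideanSpace ℝ (Fin n))
    (lam mu : Fin N → ℝ → ℝ)
    (x : Fin N → ℝ → EuclideanSpace ℝ (Fin n))
    (hx : ∀ i t, x i t = ∑ k, ρ i k t)
    (ν : Fin N → ℝ → EuclideanSpace ℝ (Fin n))
    (hν : ∀ i t, ν i t = -gradient (f i) (x i t) - (lam i t) ^ 2 • gradient (g i) (x i t)
        - mu i t • hvec i + (∑ j, a i j • (x j t - x i t)) - ∑ j, a i j • (ξ j t - ξ i t))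
    (hρ : ∀ i k t, HasDerivAt (ρ i k) (-(b i k) • ρ i k t + c i k • ν i t) t)
    (hξ : ∀ i t, HasDerivAt (ξ i) (∑ j, a i j • (x j t - x i t)) t)
    (hlam : ∀ i t, HasDerivAt (lam i) (2 * lam i t * g i (x i t)) t)
    (hmu : ∀ i t, HasDerivAt (mu i) (h i (x i t)) t)
    (hlam_pos : ∀ i t, 0 < lam i t)
    -- the Lyapunov function
    (V : ℝ → ℝ)
    (hV : ∀ t, V t =
        (∑ i, (((lam i t) ^ 2 - (lstar i) ^ 2) / 4
            - ((lstar i) ^ 2 / 2) * (Real.log (lam i t) - Real.log (lstar i))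
            + (mu i t - mstar i) ^ 2 / 2))
        + (∑ i, (‖ρ i 0 t - zstar‖ ^ 2 / (2 * c i 0)
            + ∑ k ∈ Finset.univ.erase (0 : Fin (m + 2)), ‖ρ i k t‖ ^ 2 / (2 * c i k)))
        + (1 / 2) * ∑ i, ‖ξ i t - ξstar i‖ ^ 2) :
    ∀ t, ∃ d : ℝ, HasDerivAt V d t ∧
      d ≤ -(∑ i, ⟪x i t - xstar i, ∑ j, a i j • ((x i t - xstar i) - (x j t - xstar j))⟫)
          - ∑ i, ∑ k ∈ Finset.univ.erase (0 : Fin (m + 2)),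
              (b i k / c i k) * ‖ρ i k t‖ ^ 2 ∧
      -(∑ i, ⟪x i t - xstar i, ∑ j, a i j • ((x i t - xstar i) - (x j t - xstar j))⟫)
          - ∑ i, ∑ k ∈ Finset.univ.erase (0 : Fin (m + 2)),
              (b i k / c i k) * ‖ρ i k t‖ ^ 2 ≤ 0 := by
  intro t
  refine ⟨(∑ i, (lam i t ^ 2 * g i (x i t) - lstar i ^ 2 * g i (x i t)
        + (mu i t - mstar i) * h i (x i t)))
      + (∑ i, (⟪ρ i 0 t - zstar, ν i t⟫
        + ∑ k ∈ Finset.univ.erase (0 : Fin (m + 2)),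
            (⟪ρ i k t, ν i t⟫ - (b i k / c i k) * ‖ρ i k t‖ ^ 2)))
      + (∑ i, ⟪ξ i t - ξstar i, ∑ j, a i j • (x j t - x i t)⟫), ?_, ?_, ?_⟩
  · -- HasDerivAt V d t
    have hVeq : V = fun s =>
        (∑ i, (((lam i s) ^ 2 - (lstar i) ^ 2) / 4
            - ((lstar i) ^ 2 / 2) * (Real.log (lam i s) - Real.log (lstar i))
            + (mu i s - mstar i) ^ 2 / 2))
        + (∑ i, (‖ρ i 0 s - zstar‖ ^ 2 / (2 * c i 0)
            + ∑ k ∈ Finset.univ.erase (0 : Fin (m + 2)), ‖ρ i k s‖ ^ 2 / (2 * c i k)))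
        + (1 / 2) * ∑ i, ‖ξ i s - ξstar i‖ ^ 2 := funext hV
    rw [hVeq]
    refine HasDerivAt.add (HasDerivAt.add ?_ ?_) ?_
    · -- dual scalar part
      refine HasDerivAt.fun_sum fun i _ => ?_
      have hln : lam i t ≠ 0 := (hlam_pos i t).ne'
      have H := ((((hlam i t).pow 2).sub_const (lstar i ^ 2)).div_const 4).sub
          ((((hlam i t).log hln).sub_const (Real.log (lstar i))).const_mul
            (lstar i ^ 2 / 2)) |>.add
          ((((hmu i t).sub_const (mstar i)).pow 2).div_const 2)
      refine H.congr_deriv ?_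
      field_simp
      ring
    · -- compensator part
      refine HasDerivAt.fun_sum fun i _ => ?_
      refine HasDerivAt.add ?_ ?_
      · have hr : HasDerivAt (fun s => ρ i 0 s - zstar)
            (-(b i 0) • ρ i 0 t + c i 0 • ν i t) t := (hρ i 0 t).sub_const zstar
        have H := (HasDerivAt.inner (𝕜 := ℝ) hr hr).div_const (2 * c i 0)
        simp only [real_inner_self_eq_norm_sq] at H
        refine H.congr_deriv ?_
        rw [hb0 i]
        simp only [neg_zero, zero_smul, zero_add, real_inner_smul_right,
          real_inner_smul_left, real_inner_comm (ν i t) (ρ i 0 t - zstar)]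
        field_simp [(hc i 0).ne']
        ring
      · refine HasDerivAt.fun_sum fun k _ => ?_
        have H := (HasDerivAt.inner (𝕜 := ℝ) (hρ i k t) (hρ i k t)).div_const
          (2 * c i k)
        simp only [real_inner_self_eq_norm_sq] at H
        refine H.congr_deriv ?_
        simp only [inner_add_right, inner_add_left, real_inner_smul_right,
          real_inner_smul_left, real_inner_self_eq_norm_sq,
          real_inner_comm (ν i t) (ρ i k t), neg_smul, inner_neg_right,
          inner_neg_left]
        field_simp [(hc i k).ne']
        ring
    · -- consensus-multiplier part
      have H : HasDerivAt (fun s => ∑ i, ‖ξ i s - ξstar i‖ ^ 2)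
          (∑ i, (⟪ξ i t - ξstar i, ∑ j, a i j • (x j t - x i t)⟫
            + ⟪∑ j, a i j • (x j t - x i t), ξ i t - ξstar i⟫)) t := by
        refine HasDerivAt.fun_sum fun i _ => ?_
        have hr := (hξ i t).sub_const (ξstar i)
        have := HasDerivAt.inner (𝕜 := ℝ) hr hr
        simpa only [real_inner_self_eq_norm_sq] using this
      have H2 := H.const_mul (1/2 : ℝ)
      refine H2.congr_deriv ?_
      rw [Finset.mul_sum]
      refine (Finset.sum_congr rfl fun i _ => ?_)
      rw [real_inner_comm (∑ j, a i j • (x j t - x i t)) (ξ i t - ξstar i)]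
      ring
  · -- first inequality
    simp only [hkkt_cons]
    have hw : ∀ i, (∑ j, a i j • (x j t - x i t))
        = -∑ j, a i j • (x i t - zstar - (x j t - zstar)) := by
      intro i
      rw [← Finset.sum_neg_distrib]
      refine Finset.sum_congr rfl fun j _ => ?_
      rw [← smul_neg]
      congr 1
      abel
    have hmid : ∀ i, (⟪ρ i 0 t - zstar, ν i t⟫
        + ∑ k ∈ Finset.univ.erase (0 : Fin (m + 2)),
            (⟪ρ i k t, ν i t⟫ - (b i k / c i k) * ‖ρ i k t‖ ^ 2))
        = ⟪x i t - zstar, ν i t⟫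
          - ∑ k ∈ Finset.univ.erase (0 : Fin (m + 2)),
              (b i k / c i k) * ‖ρ i k t‖ ^ 2 := by
      intro i
      rw [Finset.sum_sub_distrib]
      have hx' : x i t - zstar = (ρ i 0 t - zstar)
          + ∑ k ∈ Finset.univ.erase (0 : Fin (m + 2)), ρ i k t := by
        rw [hx i t, ← Finset.add_sum_erase _ _ (Finset.mem_univ (0 : Fin (m + 2)))]
        abel
      rw [hx', inner_add_left, sum_inner]
      ring
    have hS3 : (∑ i, ⟪ξ i t - ξstar i, ∑ j, a i j • (x j t - x i t)⟫)
        = ∑ i, ⟪x i t - zstar,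
            ∑ j, a i j • (ξ j t - ξstar j - (ξ i t - ξstar i))⟫ := by
      have e1 : ∀ i, (∑ j, a i j • (x j t - x i t))
          = ∑ j, a i j • ((x j t - zstar) - (x i t - zstar)) := by
        intro i
        refine Finset.sum_congr rfl fun j _ => ?_
        congr 1
        abel
      simp_rw [e1]
      exact aux_lap_sym a ha_symm (fun i => ξ i t - ξstar i)
        (fun i => x i t - zstar)
    have hper : ∀ i ∈ Finset.univ,
        (lam i t ^ 2 * g i (x i t) - lstar i ^ 2 * g i (x i t)
          + (mu i t - mstar i) * h i (x i t))
        + ⟪x i t - zstar, ν i t⟫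
        + ⟪x i t - zstar, ∑ j, a i j • (ξ j t - ξstar j - (ξ i t - ξstar i))⟫
        + ⟪x i t - zstar, ∑ j, a i j • (x i t - zstar - (x j t - zstar))⟫ ≤ 0 := by
      intro i _
      have hξsplit : (∑ j, a i j • (ξ j t - ξ i t))
          = (∑ j, a i j • (ξ j t - ξstar j - (ξ i t - ξstar i)))
            + ∑ j, a i j • (ξstar j - ξstar i) := by
        rw [← Finset.sum_add_distrib]
        refine Finset.sum_congr rfl fun j _ => ?_
        rw [← smul_add]
        congr 1
        abel
      have hkkt' : (∑ j, a i j • (ξstar j - ξstar i))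
          = -(gradient (f i) zstar + lstar i ^ 2 • gradient (g i) zstar
              + mstar i • hvec i) := by
        have h0 := hkkt_grad i
        have := eq_neg_of_add_eq_zero_right h0
        simpa using this
      rw [hν i t, hw i, hξsplit, hkkt']
      simp only [inner_sub_right, inner_add_right, inner_neg_right,
        real_inner_smul_right]
      have hdf : Differentiable ℝ (f i) := (hf_smooth i).differentiable (by norm_num)
      have hdg : Differentiable ℝ (g i) := (hg_smooth i).differentiable (by norm_num)
      have mono := aux_grad_mono (hf_conv i) hdf (x i t) zstar
      have monoe : ⟪gradient (f i) (x i t) - gradient (f i) zstar, x i t - zstar⟫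
          = ⟪x i t - zstar, gradient (f i) (x i t)⟫
            - ⟪x i t - zstar, gradient (f i) zstar⟫ := by
        rw [inner_sub_left, real_inner_comm (gradient (f i) (x i t)),
          real_inner_comm (gradient (f i) zstar)]
      rw [monoe] at mono
      have c1 := aux_grad_ineq (hg_conv i) hdg (x i t) zstar
      have c1e : ⟪gradient (g i) (x i t), zstar - x i t⟫
          = -⟪x i t - zstar, gradient (g i) (x i t)⟫ := by
        rw [real_inner_comm, show zstar - x i t = -(x i t - zstar) by abel,
          inner_neg_left]
      rw [c1e] at c1
      have c2 := aux_grad_ineq (hg_conv i) hdg zstar (x i t)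
      rw [real_inner_comm] at c2
      have hval : h i (x i t) = ⟪x i t - zstar, hvec i⟫ := by
        have hz := hkkt_h i
        rw [h_affine i zstar] at hz
        rw [h_affine i (x i t), real_inner_comm, inner_sub_left]
        rw [real_inner_comm] at hz
        linarith
      have hl2 : (0:ℝ) < lam i t ^ 2 := pow_pos (hlam_pos i t) 2
      have p1 : lam i t ^ 2 * (g i (x i t) + -⟪x i t - zstar, gradient (g i) (x i t)⟫)
          ≤ lam i t ^ 2 * g i zstar := mul_le_mul_of_nonneg_left c1 hl2.le
      have p2 : lstar i ^ 2 * (g i zstar + ⟪x i t - zstar, gradient (g i) zstar⟫)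
          ≤ lstar i ^ 2 * g i (x i t) := mul_le_mul_of_nonneg_left c2 (sq_nonneg _)
      have p3 : lam i t ^ 2 * g i zstar ≤ 0 := by
        have := mul_le_mul_of_nonneg_left (hkkt_g i) hl2.le
        simpa using this
      have p4 := hkkt_slack i
      rw [hval]
      nlinarith [p1, p2, p3, p4, mono]
    have key : (∑ i, (lam i t ^ 2 * g i (x i t) - lstar i ^ 2 * g i (x i t)
          + (mu i t - mstar i) * h i (x i t)))
        + (∑ i, ⟪x i t - zstar, ν i t⟫)
        + (∑ i, ⟪ξ i t - ξstar i, ∑ j, a i j • (x j t - x i t)⟫)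
        + (∑ i, ⟪x i t - zstar,
            ∑ j, a i j • (x i t - zstar - (x j t - zstar))⟫) ≤ 0 := by
      rw [hS3, ← Finset.sum_add_distrib, ← Finset.sum_add_distrib,
        ← Finset.sum_add_distrib]
      exact Finset.sum_nonpos hper
    have hdmid : (∑ i, (⟪ρ i 0 t - zstar, ν i t⟫
        + ∑ k ∈ Finset.univ.erase (0 : Fin (m + 2)),
            (⟪ρ i k t, ν i t⟫ - (b i k / c i k) * ‖ρ i k t‖ ^ 2)))
        = (∑ i, ⟪x i t - zstar, ν i t⟫)
          - ∑ i, ∑ k ∈ Finset.univ.erase (0 : Fin (m + 2)),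
              (b i k / c i k) * ‖ρ i k t‖ ^ 2 := by
      rw [Finset.sum_congr rfl fun i _ => hmid i, Finset.sum_sub_distrib]
    rw [hdmid]
    linarith [key]
  · -- second inequality
    simp only [hkkt_cons]
    have hQ : 0 ≤ ∑ i, ⟪x i t - zstar,
        ∑ j, a i j • (x i t - zstar - (x j t - zstar))⟫ :=
      aux_lap_nonneg a ha_symm ha_nonneg (fun i => x i t - zstar)
    have hR : 0 ≤ ∑ i, ∑ k ∈ Finset.univ.erase (0 : Fin (m + 2)),
        (b i k / c i k) * ‖ρ i k t‖ ^ 2 := by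
      refine Finset.sum_nonneg fun i _ => Finset.sum_nonneg fun k hk => ?_
      have hk0 : k ≠ 0 := Finset.ne_of_mem_erase hk
      have hbk : 0 ≤ b i k := by
        have := (hbmono i) (Fin.pos_of_ne_zero hk0)
        rw [hb0 i] at this
        linarith
      exact mul_nonneg (div_nonneg hbk (hc i k).le) (sq_nonneg _)
    linarith
end
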